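/- Let n ≥ 2 and 0 < ε < 1. The subspace B = {γ ∈ N_n(ε) : ∃ i, γ_i ≡ 0} of short natural directed paths with image in the boundary of [0,1]^n is compact and a (closed) neighborhood retract in N_n(ε) — i.e., there is an open set U of N_n(ε) containing B and a retraction U → B. -/

import Mathlib

open Set Filter Topology

/-- A natural directed path of `[0,1]^n` of length `ℓ`: a continuous map
`γ : [0,ℓ] → [0,1]^n`, non-decreasing in each coordinate, with `γ 0 = 0`
and `∑ i, γ t i = t` for all `t`. -/
def IsNatural (n : ℕ) (ℓ : ℝ) (γ : C(Set.Icc (0:ℝ) ℓ, Fin n → ℝ)) : Prop :=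
  (∀ i : Fin n, Monotone fun t => γ t i) ∧
  (∀ t i, γ t i ∈ Set.Icc (0:ℝ) 1) ∧
  (∀ h : (0:ℝ) ∈ Set.Icc (0:ℝ) ℓ, γ ⟨0, h⟩ = 0) ∧
  (∀ t : Set.Icc (0:ℝ) ℓ, ∑ i, γ t i = (t : ℝ))

/-- The space `N_n(ε)` of short natural directed paths of `[0,1]^n` of
natural length `ε`, with the uniform convergence (compact-open) topology. -/
def NShort (n : ℕ) (ε : ℝ) : Type :=
  {γ : C(Set.Icc (0:ℝ) ε, Fin n → ℝ) // IsNatural n ε γ}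

noncomputable instance (n : ℕ) (ε : ℝ) : MetricSpace (NShort n ε) :=
  inferInstanceAs (MetricSpace {γ : C(Set.Icc (0:ℝ) ε, Fin n → ℝ) // IsNatural n ε γ})

open scoped NNReal

namespace Stmt16Aux

variable {n : ℕ} {ε : ℝ}

/-- extension of a path to all of ℝ by clamping. -/
noncomputable def E (hε : 0 ≤ ε) (γ : NShort n ε) (t : ℝ) (i : Fin n) : ℝ :=
  γ.1 (Set.projIcc 0 ε hε t) i

noncomputable def aa (hε : 0 ≤ ε) (γ : NShort n ε) (i : Fin n) : ℝ :=
  γ.1 ⟨ε, Set.right_mem_Icc.2 hε⟩ i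

noncomputable def mm (hn : 0 < n) (hε : 0 ≤ ε) (γ : NShort n ε) : ℝ :=
  Finset.univ.inf' ⟨⟨0, hn⟩, Finset.mem_univ _⟩ (aa hε γ)

noncomputable def mu (hn : 0 < n) (hε : 0 ≤ ε) (γ : NShort n ε) (j : Fin n) (t : ℝ) : ℝ :=
  max (E hε γ t j - 2 * mm hn hε γ) 0

noncomputable def psi (hn : 0 < n) (hε : 0 ≤ ε) (γ : NShort n ε) (t : ℝ) : ℝ :=
  ∑ j, mu hn hε γ j t

noncomputable def LL (hn : 0 < n) (hε : 0 ≤ ε) (γ : NShort n ε) : ℝ :=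
  psi hn hε γ ε

noncomputable def tau (hn : 0 < n) (hε : 0 ≤ ε) (γ : NShort n ε) (σ : ℝ) : ℝ :=
  sInf {t : ℝ | 0 ≤ t ∧ σ ≤ psi hn hε γ t}

noncomputable def G (hn : 0 < n) (hε : 0 ≤ ε) (γ : NShort n ε) (j : Fin n) (σ : ℝ) : ℝ :=
  mu hn hε γ j (tau hn hε γ σ)

noncomputable def vv (hn : 0 < n) (hε : 0 ≤ ε) (γ : NShort n ε) (j : Fin n) : ℝ :=
  mu hn hε γ j ε / LL hn hε γ

noncomputable def Pf (hn : 0 < n) (hε : 0 ≤ ε) (γ : NShort n ε) (s : ℝ) (j : Fin n) : ℝ :=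
  G hn hε γ j (min s (LL hn hε γ)) + max (s - LL hn hε γ) 0 * vv hn hε γ j

section Basic

variable (hn : 0 < n) (hε : 0 ≤ ε) (γ γ' : NShort n ε)

lemma pt_nonneg (t : Set.Icc (0:ℝ) ε) (i : Fin n) : 0 ≤ γ.1 t i := (γ.2.2.1 t i).1

lemma incr_le {s t : Set.Icc (0:ℝ) ε} (h : s ≤ t) (i : Fin n) :
    γ.1 t i - γ.1 s i ≤ (t : ℝ) - s := by
  have hsum := γ.2.2.2.2
  have hmono := γ.2.1
  have h1 : ∑ j, (γ.1 t j - γ.1 s j) = (t : ℝ) - s := by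
    rw [Finset.sum_sub_distrib, hsum t, hsum s]
  calc γ.1 t i - γ.1 s i ≤ ∑ j, (γ.1 t j - γ.1 s j) := by
        apply Finset.single_le_sum (f := fun j => γ.1 t j - γ.1 s j)
        · intro j _
          have := hmono j h
          simpa using this
        · exact Finset.mem_univ i
    _ = (t : ℝ) - s := h1

lemma E_mono (i : Fin n) : Monotone (fun t => E hε γ t i) := by
  intro s t h
  exact γ.2.1 i (Set.monotone_projIcc hε h)

lemma E_nonneg (t : ℝ) (i : Fin n) : 0 ≤ E hε γ t i := pt_nonneg γ _ i

lemma E_cont (i : Fin n) : Continuous (fun t => E hε γ t i) := by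
  have h1 : Continuous γ.1 := γ.1.continuous
  exact (continuous_apply i).comp (h1.comp (continuous_projIcc))

lemma E_incr {s t : ℝ} (h : s ≤ t) (i : Fin n) : E hε γ t i - E hε γ s i ≤ t - s := by
  have hlip : dist (Set.projIcc 0 ε hε t) (Set.projIcc 0 ε hε s) ≤ dist t s :=
    by simpa using (LipschitzWith.projIcc hε).dist_le_mul t s
  rw [Subtype.dist_eq, Real.dist_eq, Real.dist_eq] at hlip
  have hmono := Set.monotone_projIcc hε h
  have h2 := incr_le γ hmono i
  have h3 : ((Set.projIcc 0 ε hε t : Set.Icc (0:ℝ) ε) : ℝ) - (Set.projIcc 0 ε hε s : Set.Icc (0:ℝ) ε) ≤ t - s := by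
    have := abs_le.1 hlip
    have habs : |t - s| = t - s := abs_of_nonneg (by linarith)
    rw [habs] at this
    rcases abs_le.1 hlip with ⟨_, h5⟩
    linarith [h5]
  exact le_trans h2 h3

lemma E_zero (i : Fin n) : E hε γ 0 i = 0 := by
  unfold E
  rw [Set.projIcc_left]
  have := γ.2.2.2.1 (Set.left_mem_Icc.2 hε)
  simp [this]

lemma E_sum (t : ℝ) : ∑ i, E hε γ t i = ((Set.projIcc 0 ε hε t : Set.Icc (0:ℝ) ε) : ℝ) := by
  exact γ.2.2.2.2 _

lemma E_eps (i : Fin n) : E hε γ ε i = aa hε γ i := by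
  unfold E aa
  rw [Set.projIcc_right]

lemma E_le_aa (t : ℝ) (i : Fin n) : E hε γ t i ≤ aa hε γ i := by
  have h1 : ((Set.projIcc 0 ε hε t : Set.Icc (0:ℝ) ε) : ℝ) ≤ ε := (Set.projIcc 0 ε hε t).2.2
  exact γ.2.1 i (Subtype.coe_le_coe.1 h1)

lemma E_ge_eps {t : ℝ} (h : ε ≤ t) (i : Fin n) : E hε γ t i = aa hε γ i := by
  unfold E aa
  rw [Set.projIcc_of_right_le (h := hε) h]

lemma E_dist (t : ℝ) (i : Fin n) : |E hε γ t i - E hε γ' t i| ≤ dist γ.1 γ'.1 := by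
  have h1 : dist (γ.1 (Set.projIcc 0 ε hε t)) (γ'.1 (Set.projIcc 0 ε hε t)) ≤ dist γ.1 γ'.1 :=
    ContinuousMap.dist_apply_le_dist _
  have h2 : dist (E hε γ t i) (E hε γ' t i) ≤ dist (γ.1 (Set.projIcc 0 ε hε t)) (γ'.1 (Set.projIcc 0 ε hε t)) :=
    dist_le_pi_dist _ _ i
  rw [Real.dist_eq] at h2
  exact le_trans h2 h1

lemma aa_nonneg (i : Fin n) : 0 ≤ aa hε γ i := pt_nonneg γ _ i

lemma aa_sum : ∑ i, aa hε γ i = ε := γ.2.2.2.2 _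

lemma mm_nonneg : 0 ≤ mm hn hε γ := by
  apply Finset.le_inf'
  intro i _
  exact aa_nonneg hε γ i

lemma mm_le_aa (i : Fin n) : mm hn hε γ ≤ aa hε γ i := by
  exact Finset.inf'_le _ (Finset.mem_univ i)

lemma exists_argmin : ∃ i, aa hε γ i = mm hn hε γ := by
  obtain ⟨i, _, hi⟩ := Finset.exists_mem_eq_inf' (⟨⟨0, hn⟩, Finset.mem_univ _⟩ :
    (Finset.univ : Finset (Fin n)).Nonempty) (aa hε γ)
  exact ⟨i, hi.symm⟩

lemma mm_dist : |mm hn hε γ - mm hn hε γ'| ≤ dist γ.1 γ'.1 := by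
  obtain ⟨i, hi⟩ := exists_argmin hn hε γ
  obtain ⟨i', hi'⟩ := exists_argmin hn hε γ'
  have d1 := E_dist hε γ γ' ε i'
  have d2 := E_dist hε γ γ' ε i
  rw [E_eps, E_eps] at d1 d2
  have l1 : mm hn hε γ ≤ aa hε γ i' := mm_le_aa hn hε γ i'
  have l2 : mm hn hε γ' ≤ aa hε γ' i := mm_le_aa hn hε γ' i
  rw [abs_le] at d1 d2 ⊢
  rw [← hi, ← hi']
  constructor
  · linarith [d2.1]
  · linarith [d1.2]

lemma mu_nonneg (j : Fin n) (t : ℝ) : 0 ≤ mu hn hε γ j t := le_max_right _ _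

lemma mu_mono (j : Fin n) : Monotone (mu hn hε γ j) := by
  intro s t h
  have h1 : E hε γ s j ≤ E hε γ t j := E_mono hε γ j h
  exact max_le_max (by linarith) le_rfl

lemma mu_cont (j : Fin n) : Continuous (mu hn hε γ j) := by
  apply Continuous.max
  · exact (E_cont hε γ j).sub continuous_const
  · exact continuous_const

lemma mu_zero (j : Fin n) : mu hn hε γ j 0 = 0 := by
  unfold mu
  rw [E_zero]
  have := mm_nonneg hn hε γ
  have : (0:ℝ) - 2 * mm hn hε γ ≤ 0 := by linarith
  simpa using this

lemma mu_le_E (j : Fin n) (t : ℝ) : mu hn hε γ j t ≤ E hε γ t j := by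
  unfold mu
  have h1 := mm_nonneg hn hε γ
  have h2 := E_nonneg hε γ t j
  apply max_le <;> linarith

lemma mu_incr {s t : ℝ} (h : s ≤ t) (j : Fin n) :
    mu hn hε γ j t - mu hn hε γ j s ≤ E hε γ t j - E hε γ s j := by
  have hE : E hε γ s j ≤ E hε γ t j := E_mono hε γ j h
  unfold mu
  rcases le_total (E hε γ t j - 2 * mm hn hε γ) 0 with h1 | h1
  · rw [max_eq_right h1]
    have h2 : E hε γ s j - 2 * mm hn hε γ ≤ 0 := by linarith
    rw [max_eq_right h2]
    linarith
  · rw [max_eq_left h1]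
    rcases le_total (E hε γ s j - 2 * mm hn hε γ) 0 with h2 | h2
    · rw [max_eq_right h2]
      linarith
    · rw [max_eq_left h2]
      linarith

lemma mu_dist (j : Fin n) (t : ℝ) :
    |mu hn hε γ j t - mu hn hε γ' j t| ≤ 3 * dist γ.1 γ'.1 := by
  have d1 := E_dist hε γ γ' t j
  have d2 := mm_dist hn hε γ γ'
  unfold mu
  have key : ∀ x y : ℝ, |max x 0 - max y 0| ≤ |x - y| := fun x y =>
    abs_max_sub_max_le_abs x y 0
  calc |max (E hε γ t j - 2 * mm hn hε γ) 0 - max (E hε γ' t j - 2 * mm hn hε γ') 0|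
      ≤ |(E hε γ t j - 2 * mm hn hε γ) - (E hε γ' t j - 2 * mm hn hε γ')| := key _ _
    _ ≤ 3 * dist γ.1 γ'.1 := by
        rw [abs_le] at d1 d2 ⊢
        constructor
        · linarith [d1.1, d2.2]
        · linarith [d1.2, d2.1]

lemma psi_mono : Monotone (psi hn hε γ) := by
  intro s t h
  exact Finset.sum_le_sum fun j _ => mu_mono hn hε γ j h

lemma psi_cont : Continuous (psi hn hε γ) := by
  exact continuous_finset_sum _ fun j _ => mu_cont hn hε γ j

lemma psi_nonneg (t : ℝ) : 0 ≤ psi hn hε γ t := by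
  exact Finset.sum_nonneg fun j _ => mu_nonneg hn hε γ j t

lemma psi_zero : psi hn hε γ 0 = 0 := by
  unfold psi
  simp [mu_zero hn hε γ]

lemma psi_le_LL (t : ℝ) : psi hn hε γ t ≤ LL hn hε γ := by
  rcases le_total t ε with h | h
  · exact psi_mono hn hε γ h
  · apply le_of_eq
    unfold LL psi
    apply Finset.sum_congr rfl
    intro j _
    unfold mu
    rw [E_ge_eps hε γ h, E_ge_eps hε γ le_rfl]

lemma LL_nonneg : 0 ≤ LL hn hε γ := psi_nonneg hn hε γ ε

lemma LL_le_eps : LL hn hε γ ≤ ε := by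
  unfold LL psi
  calc ∑ j, mu hn hε γ j ε ≤ ∑ j, E hε γ ε j :=
        Finset.sum_le_sum fun j _ => mu_le_E hn hε γ j ε
    _ = ∑ j, aa hε γ j := by
        apply Finset.sum_congr rfl
        intro j _
        exact E_eps hε γ j
    _ = ε := aa_sum hε γ

lemma mu_incr_psi {s t : ℝ} (h : s ≤ t) (j : Fin n) :
    mu hn hε γ j t - mu hn hε γ j s ≤ psi hn hε γ t - psi hn hε γ s := by
  have h1 : ∑ k, (mu hn hε γ k t - mu hn hε γ k s) = psi hn hε γ t - psi hn hε γ s := by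
    unfold psi
    rw [Finset.sum_sub_distrib]
  rw [← h1]
  apply Finset.single_le_sum (f := fun k => mu hn hε γ k t - mu hn hε γ k s)
  · intro k _
    have := mu_mono hn hε γ k h
    linarith
  · exact Finset.mem_univ j

lemma psi_dist (t : ℝ) :
    |psi hn hε γ t - psi hn hε γ' t| ≤ 3 * n * dist γ.1 γ'.1 := by
  unfold psi
  calc |∑ j, mu hn hε γ j t - ∑ j, mu hn hε γ' j t|
      = |∑ j, (mu hn hε γ j t - mu hn hε γ' j t)| := by rw [Finset.sum_sub_distrib]
    _ ≤ ∑ j : Fin n, |mu hn hε γ j t - mu hn hε γ' j t| := Finset.abs_sum_le_sum_abs _ _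
    _ ≤ ∑ _j : Fin n, 3 * dist γ.1 γ'.1 :=
        Finset.sum_le_sum fun j _ => mu_dist hn hε γ γ' j t
    _ = n * (3 * dist γ.1 γ'.1) := by simp [Finset.sum_const, Finset.card_univ]
    _ = 3 * n * dist γ.1 γ'.1 := by ring

lemma LL_dist : |LL hn hε γ - LL hn hε γ'| ≤ 3 * n * dist γ.1 γ'.1 := psi_dist hn hε γ γ' ε

end Basic

section Tau

variable (hn : 0 < n) (hε : 0 ≤ ε) (γ γ' : NShort n ε)

lemma tau_set_nonempty {σ : ℝ} (h2 : σ ≤ LL hn hε γ) :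
    {t : ℝ | 0 ≤ t ∧ σ ≤ psi hn hε γ t}.Nonempty := ⟨ε, hε, h2⟩

lemma tau_set_bdd : BddBelow {t : ℝ | 0 ≤ t ∧ σ ≤ psi hn hε γ t} :=
  ⟨0, fun _ ht => ht.1⟩

lemma tau_mem {σ : ℝ} (h2 : σ ≤ LL hn hε γ) :
    0 ≤ tau hn hε γ σ ∧ σ ≤ psi hn hε γ (tau hn hε γ σ) := by
  have hclosed : IsClosed {t : ℝ | 0 ≤ t ∧ σ ≤ psi hn hε γ t} := by
    have : {t : ℝ | 0 ≤ t ∧ σ ≤ psi hn hε γ t} =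
        Set.Ici 0 ∩ (psi hn hε γ) ⁻¹' (Set.Ici σ) := by
      ext t
      simp only [Set.mem_setOf_eq, Set.mem_inter_iff, Set.mem_Ici, Set.mem_preimage]
    rw [this]
    exact isClosed_Ici.inter (IsClosed.preimage (psi_cont hn hε γ) isClosed_Ici)
  exact hclosed.csInf_mem (tau_set_nonempty hn hε γ h2) (tau_set_bdd hn hε γ)

lemma tau_le {σ t : ℝ} (ht : 0 ≤ t) (hψ : σ ≤ psi hn hε γ t) : tau hn hε γ σ ≤ t := by
  exact csInf_le (tau_set_bdd hn hε γ) ⟨ht, hψ⟩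

lemma psi_tau {σ : ℝ} (h1 : 0 ≤ σ) (h2 : σ ≤ LL hn hε γ) :
    psi hn hε γ (tau hn hε γ σ) = σ := by
  have hψ0 : psi hn hε γ 0 = 0 := psi_zero hn hε γ
  obtain ⟨t₀, ht₀, hval⟩ : ∃ t₀ ∈ Set.Icc (0:ℝ) ε, psi hn hε γ t₀ = σ := by
    have hIVT := intermediate_value_Icc hε (psi_cont hn hε γ).continuousOn
    have : σ ∈ Set.Icc (psi hn hε γ 0) (psi hn hε γ ε) := by
      rw [hψ0]
      exact ⟨h1, h2⟩
    exact hIVT this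
  have hle : tau hn hε γ σ ≤ t₀ := tau_le hn hε γ ht₀.1 hval.symm.le
  have h3 : psi hn hε γ (tau hn hε γ σ) ≤ σ := by
    calc psi hn hε γ (tau hn hε γ σ) ≤ psi hn hε γ t₀ := psi_mono hn hε γ hle
      _ = σ := hval
  exact le_antisymm h3 (tau_mem hn hε γ h2).2

lemma tau_zero : tau hn hε γ 0 = 0 := by
  apply le_antisymm
  · exact tau_le hn hε γ le_rfl (psi_zero hn hε γ).ge
  · exact (tau_mem hn hε γ (LL_nonneg hn hε γ)).1

lemma tau_mono {σ σ' : ℝ} (h : σ ≤ σ') (h2 : σ' ≤ LL hn hε γ) :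
    tau hn hε γ σ ≤ tau hn hε γ σ' := by
  apply le_csInf (tau_set_nonempty hn hε γ h2)
  intro t ht
  exact csInf_le (tau_set_bdd hn hε γ) ⟨ht.1, le_trans h ht.2⟩

lemma mu_tau_psi {t : ℝ} (ht : 0 ≤ t) (j : Fin n) :
    mu hn hε γ j (tau hn hε γ (psi hn hε γ t)) = mu hn hε γ j t := by
  set σ := psi hn hε γ t with hσ
  have h1 : 0 ≤ σ := psi_nonneg hn hε γ t
  have h2 : σ ≤ LL hn hε γ := psi_le_LL hn hε γ t
  have hle : tau hn hε γ σ ≤ t := tau_le hn hε γ ht le_rfl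
  have hψeq : psi hn hε γ (tau hn hε γ σ) = psi hn hε γ t := psi_tau hn hε γ h1 h2
  have hup : mu hn hε γ j (tau hn hε γ σ) ≤ mu hn hε γ j t := mu_mono hn hε γ j hle
  have hdown := mu_incr_psi hn hε γ hle j
  rw [hψeq] at hdown
  linarith

end Tau

section Gsec

variable (hn : 0 < n) (hε : 0 ≤ ε) (γ γ' : NShort n ε)

lemma G_nonneg (j : Fin n) (σ : ℝ) : 0 ≤ G hn hε γ j σ := mu_nonneg hn hε γ j _

lemma G_zero (j : Fin n) : G hn hε γ j 0 = 0 := by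
  unfold G
  rw [tau_zero hn hε γ]
  exact mu_zero hn hε γ j

lemma G_mono {σ σ' : ℝ} (h : σ ≤ σ') (h2 : σ' ≤ LL hn hε γ) (j : Fin n) :
    G hn hε γ j σ ≤ G hn hε γ j σ' := by
  exact mu_mono hn hε γ j (tau_mono hn hε γ h h2)

lemma G_lip {σ σ' : ℝ} (h1 : 0 ≤ σ) (h : σ ≤ σ') (h2 : σ' ≤ LL hn hε γ) (j : Fin n) :
    G hn hε γ j σ' - G hn hε γ j σ ≤ σ' - σ := by
  unfold G
  have hτ : tau hn hε γ σ ≤ tau hn hε γ σ' := tau_mono hn hε γ h h2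
  have h3 := mu_incr_psi hn hε γ hτ j
  rw [psi_tau hn hε γ h1 (le_trans h h2), psi_tau hn hε γ (le_trans h1 h) h2] at h3
  linarith

lemma G_lip_abs {σ σ' : ℝ} (h1 : 0 ≤ σ) (h1' : 0 ≤ σ') (h2 : σ ≤ LL hn hε γ)
    (h2' : σ' ≤ LL hn hε γ) (j : Fin n) :
    |G hn hε γ j σ - G hn hε γ j σ'| ≤ |σ - σ'| := by
  rcases le_total σ σ' with h | h
  · rw [abs_sub_comm, abs_of_nonneg (by linarith [G_mono hn hε γ h h2' j] : (0:ℝ) ≤ G hn hε γ j σ' - G hn hε γ j σ)]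
    rw [abs_sub_comm, abs_of_nonneg (by linarith : (0:ℝ) ≤ σ' - σ)]
    exact G_lip hn hε γ h1 h h2' j
  · rw [abs_of_nonneg (by linarith [G_mono hn hε γ h h2 j] : (0:ℝ) ≤ G hn hε γ j σ - G hn hε γ j σ'), abs_of_nonneg (by linarith : (0:ℝ) ≤ σ - σ')]
    exact G_lip hn hε γ h1' h h2 j

lemma G_sum {σ : ℝ} (h1 : 0 ≤ σ) (h2 : σ ≤ LL hn hε γ) :
    ∑ j, G hn hε γ j σ = σ := by
  unfold G
  have : ∑ j, mu hn hε γ j (tau hn hε γ σ) = psi hn hε γ (tau hn hε γ σ) := rfl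
  rw [this, psi_tau hn hε γ h1 h2]

lemma G_cross {σ : ℝ} (h1 : 0 ≤ σ) (h2 : σ ≤ LL hn hε γ) (h2' : σ ≤ LL hn hε γ') (j : Fin n) :
    |G hn hε γ j σ - G hn hε γ' j σ| ≤ 3 * dist γ.1 γ'.1 + 3 * n * dist γ.1 γ'.1 := by
  set d := dist γ.1 γ'.1 with hd
  set t := tau hn hε γ σ with ht
  have ht0 : 0 ≤ t := (tau_mem hn hε γ h2).1
  have hψt : psi hn hε γ t = σ := psi_tau hn hε γ h1 h2
  have e1 : G hn hε γ j σ = mu hn hε γ j t := rfl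
  have e2 : G hn hε γ' j (psi hn hε γ' t) = mu hn hε γ' j t := mu_tau_psi hn hε γ' ht0 j
  have hψ'1 : 0 ≤ psi hn hε γ' t := psi_nonneg hn hε γ' t
  have hψ'2 : psi hn hε γ' t ≤ LL hn hε γ' := psi_le_LL hn hε γ' t
  have step1 : |G hn hε γ' j σ - G hn hε γ' j (psi hn hε γ' t)| ≤ |σ - psi hn hε γ' t| :=
    G_lip_abs hn hε γ' h1 hψ'1 h2' hψ'2 j
  have step2 : |σ - psi hn hε γ' t| ≤ 3 * n * d := by
    rw [← hψt]
    exact psi_dist hn hε γ γ' t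
  have step3 : |mu hn hε γ j t - mu hn hε γ' j t| ≤ 3 * d := mu_dist hn hε γ γ' j t
  have tri : |mu hn hε γ j t - G hn hε γ' j σ| ≤
      |mu hn hε γ j t - mu hn hε γ' j t| + |mu hn hε γ' j t - G hn hε γ' j σ| :=
    abs_sub_le _ _ _
  have hBC : |mu hn hε γ' j t - G hn hε γ' j σ| ≤ 3 * n * d := by
    rw [← e2, abs_sub_comm]
    exact le_trans step1 step2
  rw [e1]
  linarith

end Gsec

section Psec

variable (hn : 0 < n) (hε : 0 ≤ ε) (γ γ' : NShort n ε)

lemma abs_min_sub_min_le_abs' (a b c : ℝ) : |min a c - min b c| ≤ |a - b| := by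
  have n1 := neg_abs_le (a - b)
  have n2 := le_abs_self (a - b)
  have n3 := abs_nonneg (a - b)
  rcases le_total a c with h1 | h1 <;> rcases le_total b c with h2 | h2 <;>
    rw [abs_le] <;>
    simp only [min_eq_left, min_eq_right, h1, h2] <;>
    constructor <;> linarith

lemma coe_projIcc_le {t : ℝ} (hε : 0 ≤ ε) (ht : 0 ≤ t) :
    ((Set.projIcc 0 ε hε t : Set.Icc (0:ℝ) ε) : ℝ) ≤ t := by
  rw [Set.coe_projIcc]
  exact max_le ht (min_le_right _ _)

lemma mu_eps_le_LL (hn : 0 < n) (hε : 0 ≤ ε) (γ : NShort n ε) (j : Fin n) :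
    mu hn hε γ j ε ≤ LL hn hε γ := by
  unfold LL psi
  exact Finset.single_le_sum (f := fun k => mu hn hε γ k ε)
    (fun k _ => mu_nonneg hn hε γ k ε) (Finset.mem_univ j)

lemma vv_nonneg (hL : 0 < LL hn hε γ) (j : Fin n) : 0 ≤ vv hn hε γ j := by
  exact div_nonneg (mu_nonneg hn hε γ j ε) hL.le

lemma vv_le_one (hL : 0 < LL hn hε γ) (j : Fin n) : vv hn hε γ j ≤ 1 := by
  unfold vv
  rw [div_le_one hL]
  exact mu_eps_le_LL hn hε γ j

lemma vv_sum (hL : 0 < LL hn hε γ) : ∑ j, vv hn hε γ j = 1 := by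
  unfold vv
  rw [← Finset.sum_div]
  have : ∑ j, mu hn hε γ j ε = LL hn hε γ := rfl
  rw [this, div_self (ne_of_gt hL)]

lemma Pf_nonneg (hL : 0 < LL hn hε γ) (s : ℝ) (j : Fin n) : 0 ≤ Pf hn hε γ s j := by
  unfold Pf
  have h1 := G_nonneg hn hε γ j (min s (LL hn hε γ))
  have h2 : 0 ≤ max (s - LL hn hε γ) 0 := le_max_right _ _
  have h3 := vv_nonneg hn hε γ hL j
  positivity

lemma Pf_sum (hL : 0 < LL hn hε γ) {s : ℝ} (hs : 0 ≤ s) : ∑ j, Pf hn hε γ s j = s := by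
  unfold Pf
  rw [Finset.sum_add_distrib, ← Finset.mul_sum, vv_sum hn hε γ hL,
    G_sum hn hε γ (le_min hs (LL_nonneg hn hε γ)) (min_le_right _ _)]
  rcases le_total s (LL hn hε γ) with h | h
  · rw [min_eq_left h, max_eq_right (by linarith), mul_one]
    ring
  · rw [min_eq_right h, max_eq_left (by linarith), mul_one]
    ring

lemma Pf_mono (hL : 0 < LL hn hε γ) {s s' : ℝ} (hs : 0 ≤ s) (h : s ≤ s') (j : Fin n) :
    Pf hn hε γ s j ≤ Pf hn hε γ s' j := by
  unfold Pf
  have hG : G hn hε γ j (min s (LL hn hε γ)) ≤ G hn hε γ j (min s' (LL hn hε γ)) :=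
    G_mono hn hε γ (min_le_min h le_rfl) (min_le_right _ _) j
  have hmax : max (s - LL hn hε γ) 0 ≤ max (s' - LL hn hε γ) 0 :=
    max_le_max (by linarith) le_rfl
  have hv := vv_nonneg hn hε γ hL j
  have := mul_le_mul_of_nonneg_right hmax hv
  linarith

lemma Pf_zero (j : Fin n) : Pf hn hε γ 0 j = 0 := by
  unfold Pf
  rw [min_eq_left (LL_nonneg hn hε γ), G_zero hn hε γ j,
    max_eq_right (by linarith [LL_nonneg hn hε γ] : 0 - LL hn hε γ ≤ 0)]
  ring

lemma Pf_lip (hL : 0 < LL hn hε γ) {s s' : ℝ} (hs : 0 ≤ s) (hs' : 0 ≤ s') (j : Fin n) :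
    |Pf hn hε γ s j - Pf hn hε γ s' j| ≤ 2 * |s - s'| := by
  unfold Pf
  set L := LL hn hε γ with hLdef
  have hL0 := LL_nonneg hn hε γ
  have hG : |G hn hε γ j (min s L) - G hn hε γ j (min s' L)| ≤ |min s L - min s' L| :=
    G_lip_abs hn hε γ (le_min hs hL0) (le_min hs' hL0) (min_le_right _ _) (min_le_right _ _) j
  have hmin : |min s L - min s' L| ≤ |s - s'| := by
    rw [min_comm s L, min_comm s' L]
    have := abs_min_sub_min_le_abs' s s' L
    rw [min_comm s L, min_comm s' L] at this
    exact this
  have hmax : |max (s - L) 0 - max (s' - L) 0| ≤ |s - s'| := by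
    have := abs_max_sub_max_le_abs (s - L) (s' - L) 0
    simpa using this
  have hv0 := vv_nonneg hn hε γ hL j
  have hv1 := vv_le_one hn hε γ hL j
  have htail : |max (s - L) 0 * vv hn hε γ j - max (s' - L) 0 * vv hn hε γ j| ≤ |s - s'| := by
    rw [← sub_mul, abs_mul, abs_of_nonneg hv0]
    calc |max (s - L) 0 - max (s' - L) 0| * vv hn hε γ j
        ≤ |s - s'| * 1 := mul_le_mul hmax hv1 hv0 (abs_nonneg _)
      _ = |s - s'| := mul_one _
  calc |(G hn hε γ j (min s L) + max (s - L) 0 * vv hn hε γ j) -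
        (G hn hε γ j (min s' L) + max (s' - L) 0 * vv hn hε γ j)|
      ≤ |G hn hε γ j (min s L) - G hn hε γ j (min s' L)| +
        |max (s - L) 0 * vv hn hε γ j - max (s' - L) 0 * vv hn hε γ j| := by
        have := abs_add_le (G hn hε γ j (min s L) - G hn hε γ j (min s' L))
          (max (s - L) 0 * vv hn hε γ j - max (s' - L) 0 * vv hn hε γ j)
        calc _ = |(G hn hε γ j (min s L) - G hn hε γ j (min s' L)) +
              (max (s - L) 0 * vv hn hε γ j - max (s' - L) 0 * vv hn hε γ j)| := by ring_nf
          _ ≤ _ := this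
    _ ≤ 2 * |s - s'| := by
        have := le_trans hG hmin
        linarith

lemma Pf_exists_zero (j₀ : Fin n) (hj₀ : aa hε γ j₀ = mm hn hε γ) (s : ℝ) :
    Pf hn hε γ s j₀ = 0 := by
  have hmu : ∀ t, mu hn hε γ j₀ t = 0 := by
    intro t
    unfold mu
    have h1 : E hε γ t j₀ ≤ aa hε γ j₀ := E_le_aa hε γ t j₀
    have h2 := mm_nonneg hn hε γ
    rw [hj₀] at h1
    exact max_eq_right (by linarith)
  unfold Pf G vv
  rw [hmu, hmu]
  simp

lemma mm_eq_zero (h : ∃ i, ∀ t, γ.1 t i = 0) : mm hn hε γ = 0 := by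
  obtain ⟨i, hi⟩ := h
  have h1 : aa hε γ i = 0 := hi _
  have h2 := mm_le_aa hn hε γ i
  have h3 := mm_nonneg hn hε γ
  linarith

lemma LL_eq_of_B (h : ∃ i, ∀ t, γ.1 t i = 0) : LL hn hε γ = ε := by
  have hmm0 : mm hn hε γ = 0 := mm_eq_zero hn hε γ h
  have hmu : ∀ (t : ℝ) (k : Fin n), mu hn hε γ k t = E hε γ t k := by
    intro t k
    unfold mu
    rw [hmm0, mul_zero, sub_zero]
    exact max_eq_left (E_nonneg hε γ t k)
  unfold LL psi
  rw [Finset.sum_congr rfl fun k _ => hmu ε k, E_sum hε γ ε, Set.projIcc_right]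

lemma Pf_id (h : ∃ i, ∀ t, γ.1 t i = 0) {s : ℝ} (hs : s ∈ Set.Icc 0 ε) (j : Fin n) :
    Pf hn hε γ s j = γ.1 ⟨s, hs⟩ j := by
  have hmm0 : mm hn hε γ = 0 := mm_eq_zero hn hε γ h
  have hmu : ∀ (t : ℝ) (k : Fin n), mu hn hε γ k t = E hε γ t k := by
    intro t k
    unfold mu
    rw [hmm0]
    rw [mul_zero, sub_zero]
    exact max_eq_left (E_nonneg hε γ t k)
  have hpsi : ∀ t : ℝ, psi hn hε γ t = ((Set.projIcc 0 ε hε t : Set.Icc (0:ℝ) ε) : ℝ) := by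
    intro t
    unfold psi
    rw [Finset.sum_congr rfl fun k _ => hmu t k]
    exact E_sum hε γ t
  have hLL : LL hn hε γ = ε := by
    unfold LL
    rw [hpsi ε, Set.projIcc_right]
  have htau : tau hn hε γ s = s := by
    apply le_antisymm
    · apply tau_le hn hε γ hs.1
      rw [hpsi s, Set.projIcc_of_mem hε hs]
    · have h2 : s ≤ LL hn hε γ := by rw [hLL]; exact hs.2
      have h3 := (tau_mem hn hε γ h2).2
      have h4 := (tau_mem hn hε γ h2).1
      rw [hpsi _] at h3
      exact le_trans h3 (coe_projIcc_le hε h4)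
  unfold Pf G
  rw [hLL, min_eq_left hs.2, htau, hmu, max_eq_right (by linarith [hs.2]), zero_mul, add_zero]
  unfold E
  rw [Set.projIcc_of_mem hε hs]

lemma Pf_dist (hL : ε/2 < LL hn hε γ) (hL' : ε/2 < LL hn hε γ') (hε0 : 0 < ε)
    {s : ℝ} (hs : 0 ≤ s) (hse : s ≤ ε) (j : Fin n) :
    |Pf hn hε γ s j - Pf hn hε γ' s j| ≤ (24 * n + 15) * dist γ.1 γ'.1 := by
  set d := dist γ.1 γ'.1 with hd
  have hd0 : 0 ≤ d := dist_nonneg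
  set L := LL hn hε γ with hLdef
  set L' := LL hn hε γ' with hLdef'
  have hL0 : 0 < L := lt_of_lt_of_le (by linarith) hL.le
  have hL0' : 0 < L' := lt_of_lt_of_le (by linarith) hL'.le
  have hLe : L ≤ ε := LL_le_eps hn hε γ
  have hLe' : L' ≤ ε := LL_le_eps hn hε γ'
  have hLL' : |L - L'| ≤ 3 * n * d := LL_dist hn hε γ γ'
  set σ := min s L with hσ
  set σ' := min s L' with hσ'
  set σb := min σ σ' with hσb
  have hσ0 : 0 ≤ σ := le_min hs hL0.le
  have hσ0' : 0 ≤ σ' := le_min hs hL0'.le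
  have hσb0 : 0 ≤ σb := le_min hσ0 hσ0'
  have hσL : σ ≤ L := min_le_right _ _
  have hσL' : σ' ≤ L' := min_le_right _ _
  have hσbL : σb ≤ L := le_trans (min_le_left _ _) hσL
  have hσbL' : σb ≤ L' := le_trans (min_le_right _ _) hσL'
  have hσσ' : |σ - σ'| ≤ |L - L'| := by
    rw [hσ, hσ', min_comm s L, min_comm s L']
    exact abs_min_sub_min_le_abs' L L' s
  have hσσb : |σ - σb| ≤ |σ - σ'| := by
    rcases le_total σ σ' with h | h
    · rw [hσb, min_eq_left h, sub_self, abs_zero]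
      exact abs_nonneg _
    · rw [hσb, min_eq_right h]
  have hσ'σb : |σ' - σb| ≤ |σ - σ'| := by
    rcases le_total σ σ' with h | h
    · rw [hσb, min_eq_left h, abs_sub_comm]
    · rw [hσb, min_eq_right h, sub_self, abs_zero]
      exact abs_nonneg _
  have hG1 : |G hn hε γ j σ - G hn hε γ j σb| ≤ |σ - σ'| :=
    le_trans (G_lip_abs hn hε γ hσ0 hσb0 hσL hσbL j) hσσb
  have hG2 : |G hn hε γ j σb - G hn hε γ' j σb| ≤ 3 * d + 3 * n * d :=
    G_cross hn hε γ γ' hσb0 hσbL hσbL' j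
  have hG3 : |G hn hε γ' j σb - G hn hε γ' j σ'| ≤ |σ - σ'| := by
    rw [abs_sub_comm]
    exact le_trans (G_lip_abs hn hε γ' hσ0' hσb0 hσL' hσbL' j) hσ'σb
  have hGtot : |G hn hε γ j σ - G hn hε γ' j σ'| ≤ 6 * n * d + 3 * d + 3 * n * d := by
    have t1 : |G hn hε γ j σ - G hn hε γ' j σ'| ≤
        |G hn hε γ j σ - G hn hε γ j σb| + |G hn hε γ j σb - G hn hε γ' j σb| +
        |G hn hε γ' j σb - G hn hε γ' j σ'| := by
      have := abs_sub_le (G hn hε γ j σ) (G hn hε γ j σb) (G hn hε γ' j σ')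
      have := abs_sub_le (G hn hε γ j σb) (G hn hε γ' j σb) (G hn hε γ' j σ')
      linarith [abs_sub_le (G hn hε γ j σ) (G hn hε γ j σb) (G hn hε γ' j σ'),
        abs_sub_le (G hn hε γ j σb) (G hn hε γ' j σb) (G hn hε γ' j σ')]
    have := le_trans hσσb hσσ'
    linarith [le_trans hσσ' hLL']
  -- tail estimate
  set w := mu hn hε γ j ε with hw
  set w' := mu hn hε γ' j ε with hw'
  have hw0 : 0 ≤ w := mu_nonneg hn hε γ j ε
  have hw0' : 0 ≤ w' := mu_nonneg hn hε γ' j ε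
  have hwL : w ≤ L := mu_eps_le_LL hn hε γ j
  have hwL' : w' ≤ L' := mu_eps_le_LL hn hε γ' j
  have hww' : |w - w'| ≤ 3 * d := mu_dist hn hε γ γ' j ε
  have hnum : |w * L' - w' * L| ≤ 3 * ε * d + 3 * n * ε * d := by
    have e1 : w * L' - w' * L = (w - w') * L' + w' * (L' - L) := by ring
    rw [e1]
    calc |(w - w') * L' + w' * (L' - L)| ≤ |(w - w') * L'| + |w' * (L' - L)| := abs_add_le _ _
      _ = |w - w'| * L' + w' * |L' - L| := by
          rw [abs_mul, abs_mul, abs_of_nonneg hL0'.le, abs_of_nonneg hw0']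
      _ ≤ 3 * d * ε + ε * (3 * n * d) := by
          have b1 : |w - w'| * L' ≤ 3 * d * ε :=
            mul_le_mul hww' hLe' hL0'.le (by linarith)
          have b2 : w' * |L' - L| ≤ ε * (3 * n * d) := by
            rw [abs_sub_comm]
            exact mul_le_mul (le_trans hwL' hLe') hLL' (abs_nonneg _) hε0.le
          linarith
      _ = 3 * ε * d + 3 * n * ε * d := by ring
  have hvd : |vv hn hε γ j - vv hn hε γ' j| ≤ (3 * ε * d + 3 * n * ε * d) / (ε * ε / 4) := by
    have e1 : vv hn hε γ j - vv hn hε γ' j = (w * L' - w' * L) / (L * L') := by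
      unfold vv
      rw [← hLdef, ← hLdef', ← hw, ← hw']
      field_simp
    rw [e1, abs_div, abs_of_pos (mul_pos hL0 hL0')]
    apply div_le_div₀ (by positivity) hnum (by positivity)
    calc ε * ε / 4 = (ε/2) * (ε/2) := by ring
      _ ≤ L * L' := by
          apply mul_le_mul hL.le hL'.le (by positivity) hL0.le
  have hmax1 : |max (s - L) 0 - max (s - L') 0| ≤ 3 * n * d := by
    have h1 := abs_max_sub_max_le_abs (s - L) (s - L') 0
    have h2 : |s - L - (s - L')| = |L' - L| := by ring_nf
    rw [h2] at h1
    rw [abs_sub_comm] at hLL'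
    exact le_trans h1 hLL'
  have hmaxε : max (s - L') 0 ≤ ε := by
    apply max_le _ hε0.le
    linarith
  have hv1 : vv hn hε γ j ≤ 1 := vv_le_one hn hε γ hL0 j
  have hv0 : 0 ≤ vv hn hε γ j := vv_nonneg hn hε γ hL0 j
  have htail : |max (s - L) 0 * vv hn hε γ j - max (s - L') 0 * vv hn hε γ' j| ≤
      3 * n * d + (12 * d + 12 * n * d) := by
    have e1 : max (s - L) 0 * vv hn hε γ j - max (s - L') 0 * vv hn hε γ' j =
        (max (s - L) 0 - max (s - L') 0) * vv hn hε γ j +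
        max (s - L') 0 * (vv hn hε γ j - vv hn hε γ' j) := by ring
    rw [e1]
    have b1 : |(max (s - L) 0 - max (s - L') 0) * vv hn hε γ j| ≤ 3 * n * d := by
      rw [abs_mul, abs_of_nonneg hv0]
      calc |max (s - L) 0 - max (s - L') 0| * vv hn hε γ j ≤ (3 * n * d) * 1 :=
            mul_le_mul hmax1 hv1 hv0 (by positivity)
        _ = 3 * n * d := mul_one _
    have b2 : |max (s - L') 0 * (vv hn hε γ j - vv hn hε γ' j)| ≤ 12 * d + 12 * n * d := by
      rw [abs_mul, abs_of_nonneg (le_max_right _ _)]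
      calc max (s - L') 0 * |vv hn hε γ j - vv hn hε γ' j|
          ≤ ε * ((3 * ε * d + 3 * n * ε * d) / (ε * ε / 4)) :=
            mul_le_mul hmaxε hvd (abs_nonneg _) hε0.le
        _ = 12 * d + 12 * n * d := by
            field_simp
            ring
    calc |(max (s - L) 0 - max (s - L') 0) * vv hn hε γ j +
          max (s - L') 0 * (vv hn hε γ j - vv hn hε γ' j)|
        ≤ |(max (s - L) 0 - max (s - L') 0) * vv hn hε γ j| +
          |max (s - L') 0 * (vv hn hε γ j - vv hn hε γ' j)| := abs_add_le _ _
      _ ≤ 3 * n * d + (12 * d + 12 * n * d) := by linarith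
  unfold Pf
  rw [← hLdef, ← hLdef', ← hσ, ← hσ']
  calc |G hn hε γ j σ + max (s - L) 0 * vv hn hε γ j -
        (G hn hε γ' j σ' + max (s - L') 0 * vv hn hε γ' j)|
      ≤ |G hn hε γ j σ - G hn hε γ' j σ'| +
        |max (s - L) 0 * vv hn hε γ j - max (s - L') 0 * vv hn hε γ' j| := by
        have := abs_add_le (G hn hε γ j σ - G hn hε γ' j σ')
          (max (s - L) 0 * vv hn hε γ j - max (s - L') 0 * vv hn hε γ' j)
        calc _ = |(G hn hε γ j σ - G hn hε γ' j σ') +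
              (max (s - L) 0 * vv hn hε γ j - max (s - L') 0 * vv hn hε γ' j)| := by ring_nf
          _ ≤ _ := this
    _ ≤ (24 * n + 15) * d := by linarith

end Psec


section Main

variable (hn : 0 < n) (hε : 0 < ε)

/-- The retracted path, as a continuous map. -/
noncomputable def PCont (γ : NShort n ε) (hL : 0 < LL hn hε.le γ) :
    C(Set.Icc (0:ℝ) ε, Fin n → ℝ) :=
  ⟨fun s j => Pf hn hε.le γ (s : ℝ) j, by
    apply continuous_pi
    intro j
    apply LipschitzWith.continuous (K := 2)
    apply LipschitzWith.of_dist_le_mul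
    intro s t
    rw [Real.dist_eq, Subtype.dist_eq, Real.dist_eq]
    have := Pf_lip hn hε.le γ hL s.2.1 t.2.1 j
    calc |Pf hn hε.le γ (s:ℝ) j - Pf hn hε.le γ (t:ℝ) j| ≤ 2 * |(s:ℝ) - (t:ℝ)| := this
      _ = ((2:ℝ≥0):ℝ) * |(s:ℝ) - (t:ℝ)| := by norm_num⟩

lemma PCont_apply (γ : NShort n ε) (hL : 0 < LL hn hε.le γ) (s : Set.Icc (0:ℝ) ε) (j : Fin n) :
    PCont hn hε γ hL s j = Pf hn hε.le γ (s : ℝ) j := rfl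

lemma PCont_natural (hε1 : ε < 1) (γ : NShort n ε) (hL : 0 < LL hn hε.le γ) :
    IsNatural n ε (PCont hn hε γ hL) := by
  refine ⟨?_, ?_, ?_, ?_⟩
  · intro i s t h
    exact Pf_mono hn hε.le γ hL s.2.1 (Subtype.coe_le_coe.2 h) i
  · intro t i
    constructor
    · exact Pf_nonneg hn hε.le γ hL _ i
    · have hsum := Pf_sum hn hε.le γ hL t.2.1
      have hle : Pf hn hε.le γ (t:ℝ) i ≤ ∑ j, Pf hn hε.le γ (t:ℝ) j :=
        Finset.single_le_sum (f := fun j => Pf hn hε.le γ (t:ℝ) j)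
          (fun j _ => Pf_nonneg hn hε.le γ hL _ j) (Finset.mem_univ i)
      rw [hsum] at hle
      have := t.2.2
      calc (PCont hn hε γ hL) t i = Pf hn hε.le γ (t:ℝ) i := rfl
        _ ≤ (t:ℝ) := hle
        _ ≤ 1 := by linarith
  · intro h
    funext i
    exact Pf_zero hn hε.le γ i
  · intro t
    exact Pf_sum hn hε.le γ hL t.2.1

lemma PCont_memB (γ : NShort n ε) (hL : 0 < LL hn hε.le γ) :
    ∃ i, ∀ t, (PCont hn hε γ hL) t i = 0 := by
  obtain ⟨i, hi⟩ := exists_argmin hn hε.le γ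
  exact ⟨i, fun t => Pf_exists_zero hn hε.le γ i hi (t : ℝ)⟩

lemma LL_continuous : Continuous fun γ : NShort n ε => LL hn hε.le γ := by
  apply LipschitzWith.continuous (K := 3 * n)
  apply LipschitzWith.of_dist_le_mul
  intro γ γ'
  rw [Real.dist_eq]
  have h1 := LL_dist hn hε.le γ γ'
  have h2 : dist γ.1 γ'.1 = dist γ γ' := (Subtype.dist_eq γ γ').symm
  rw [h2] at h1
  calc |LL hn hε.le γ - LL hn hε.le γ'| ≤ 3 * n * dist γ γ' := h1
    _ = ((3 * n : ℝ≥0) : ℝ) * dist γ γ' := by push_cast; ring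

end Main


section Compactness

lemma coord_abs_le (γ : NShort n ε) (s t : Set.Icc (0:ℝ) ε) (i : Fin n) :
    |γ.1 s i - γ.1 t i| ≤ |(s : ℝ) - (t : ℝ)| := by
  rcases le_total s t with h | h
  · have h1 := incr_le γ h i
    have h2 : γ.1 s i ≤ γ.1 t i := γ.2.1 i h
    have h3 : (s:ℝ) ≤ (t:ℝ) := Subtype.coe_le_coe.2 h
    rw [abs_sub_comm, abs_of_nonneg (by linarith), abs_sub_comm, abs_of_nonneg (by linarith)]
    linarith
  · have h1 := incr_le γ h i
    have h2 : γ.1 t i ≤ γ.1 s i := γ.2.1 i h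
    have h3 : (t:ℝ) ≤ (s:ℝ) := Subtype.coe_le_coe.2 h
    rw [abs_of_nonneg (by linarith), abs_of_nonneg (by linarith)]
    linarith

lemma natural_continuous (f : Set.Icc (0:ℝ) ε → Fin n → ℝ)
    (hmono : ∀ i : Fin n, Monotone fun t => f t i)
    (hsum : ∀ t : Set.Icc (0:ℝ) ε, ∑ i, f t i = (t : ℝ)) : Continuous f := by
  apply continuous_pi
  intro i
  apply LipschitzWith.continuous (K := 1)
  apply LipschitzWith.of_dist_le_mul
  intro s t
  rw [Real.dist_eq, Subtype.dist_eq, Real.dist_eq]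
  have key : ∀ u v : Set.Icc (0:ℝ) ε, u ≤ v → f v i - f u i ≤ (v : ℝ) - u := by
    intro u v huv
    have h1 : ∑ j, (f v j - f u j) = (v : ℝ) - u := by
      rw [Finset.sum_sub_distrib, hsum v, hsum u]
    calc f v i - f u i ≤ ∑ j, (f v j - f u j) := by
          apply Finset.single_le_sum (f := fun j => f v j - f u j)
          · intro j _
            have := hmono j huv
            simpa using this
          · exact Finset.mem_univ i
      _ = (v : ℝ) - u := h1
  have goal : |f s i - f t i| ≤ |(s:ℝ) - (t:ℝ)| := by
    rcases le_total s t with h | h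
    · have h1 := key s t h
      have h2 : f s i ≤ f t i := hmono i h
      have h3 : (s:ℝ) ≤ (t:ℝ) := Subtype.coe_le_coe.2 h
      rw [abs_sub_comm, abs_of_nonneg (by linarith), abs_sub_comm, abs_of_nonneg (by linarith)]
      linarith
    · have h1 := key t s h
      have h2 : f t i ≤ f s i := hmono i h
      have h3 : (t:ℝ) ≤ (s:ℝ) := Subtype.coe_le_coe.2 h
      rw [abs_of_nonneg (by linarith), abs_of_nonneg (by linarith)]
      linarith
  calc |f s i - f t i| ≤ |(s:ℝ) - (t:ℝ)| := goal
    _ = ((1:ℝ≥0):ℝ) * |(s:ℝ) - (t:ℝ)| := by norm_num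

lemma isCompact_natural (hε : 0 ≤ ε) :
    IsCompact {f : C(Set.Icc (0:ℝ) ε, Fin n → ℝ) | IsNatural n ε f} := by
  set S := {f : C(Set.Icc (0:ℝ) ε, Fin n → ℝ) | IsNatural n ε f} with hS
  set T : Set (Set.Icc (0:ℝ) ε → Fin n → ℝ) :=
    {f | (∀ i : Fin n, Monotone fun t => f t i) ∧
      (∀ t i, f t i ∈ Set.Icc (0:ℝ) 1) ∧
      (∀ h : (0:ℝ) ∈ Set.Icc (0:ℝ) ε, f ⟨0, h⟩ = 0) ∧
      (∀ t : Set.Icc (0:ℝ) ε, ∑ i, f t i = (t : ℝ))} with hT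
  apply ArzelaAscoli.isCompact_of_equicontinuous
  · -- image compact
    have himg : ContinuousMap.toFun '' S = T := by
      ext f
      constructor
      · rintro ⟨g, hg, rfl⟩
        exact hg
      · intro hf
        have hcont : Continuous f := natural_continuous f hf.1 hf.2.2.2
        exact ⟨⟨f, hcont⟩, hf, rfl⟩
    rw [himg]
    have hTsub : T ⊆ Set.pi Set.univ (fun _ : Set.Icc (0:ℝ) ε =>
        Set.pi Set.univ fun _ : Fin n => Set.Icc (0:ℝ) 1) := by
      intro f hf t _ i _
      exact hf.2.1 t i
    have hK : IsCompact (Set.pi Set.univ (fun _ : Set.Icc (0:ℝ) ε =>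
        Set.pi Set.univ fun _ : Fin n => Set.Icc (0:ℝ) 1)) :=
      isCompact_univ_pi fun _ => isCompact_univ_pi fun _ => isCompact_Icc
    apply IsCompact.of_isClosed_subset hK _ hTsub
    have c1 : IsClosed {f : Set.Icc (0:ℝ) ε → Fin n → ℝ |
        ∀ i : Fin n, Monotone fun t => f t i} := by
      have : {f : Set.Icc (0:ℝ) ε → Fin n → ℝ | ∀ i : Fin n, Monotone fun t => f t i} =
          ⋂ (i : Fin n), ⋂ (s : Set.Icc (0:ℝ) ε), ⋂ (t : Set.Icc (0:ℝ) ε), ⋂ (_ : s ≤ t),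
            {f | f s i ≤ f t i} := by
        ext f
        simp only [Set.mem_setOf_eq, Set.mem_iInter]
        constructor
        · intro h i s t hst
          exact h i hst
        · intro h i s t hst
          exact h i s t hst
      rw [this]
      refine isClosed_iInter fun i => isClosed_iInter fun s => isClosed_iInter fun t =>
        isClosed_iInter fun _ => ?_
      exact isClosed_le ((continuous_apply i).comp (continuous_apply s))
        ((continuous_apply i).comp (continuous_apply t))
    have c2 : IsClosed {f : Set.Icc (0:ℝ) ε → Fin n → ℝ | ∀ t i, f t i ∈ Set.Icc (0:ℝ) 1} := by
      have : {f : Set.Icc (0:ℝ) ε → Fin n → ℝ | ∀ t i, f t i ∈ Set.Icc (0:ℝ) 1} =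
          ⋂ (t : Set.Icc (0:ℝ) ε), ⋂ (i : Fin n), {f | f t i ∈ Set.Icc (0:ℝ) 1} := by
        ext f
        simp [Set.mem_iInter]
      rw [this]
      refine isClosed_iInter fun t => isClosed_iInter fun i => ?_
      exact IsClosed.preimage ((continuous_apply i).comp (continuous_apply t)) isClosed_Icc
    have c3 : IsClosed {f : Set.Icc (0:ℝ) ε → Fin n → ℝ |
        ∀ h : (0:ℝ) ∈ Set.Icc (0:ℝ) ε, f ⟨0, h⟩ = 0} := by
      rcases Classical.em ((0:ℝ) ∈ Set.Icc (0:ℝ) ε) with h0 | h0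
      · have : {f : Set.Icc (0:ℝ) ε → Fin n → ℝ | ∀ h : (0:ℝ) ∈ Set.Icc (0:ℝ) ε, f ⟨0, h⟩ = 0} =
            {f | f ⟨0, h0⟩ = 0} := by
          ext f
          simp only [Set.mem_setOf_eq]
          exact ⟨fun h => h h0, fun h _ => h⟩
        rw [this]
        exact isClosed_eq (continuous_apply _) continuous_const
      · have : {f : Set.Icc (0:ℝ) ε → Fin n → ℝ | ∀ h : (0:ℝ) ∈ Set.Icc (0:ℝ) ε, f ⟨0, h⟩ = 0} =
            Set.univ := by
          ext f
          simp only [Set.mem_setOf_eq, Set.mem_univ, iff_true]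
          intro h
          exact absurd h h0
        rw [this]
        exact isClosed_univ
    have c4 : IsClosed {f : Set.Icc (0:ℝ) ε → Fin n → ℝ |
        ∀ t : Set.Icc (0:ℝ) ε, ∑ i, f t i = (t : ℝ)} := by
      have : {f : Set.Icc (0:ℝ) ε → Fin n → ℝ | ∀ t : Set.Icc (0:ℝ) ε, ∑ i, f t i = (t : ℝ)} =
          ⋂ (t : Set.Icc (0:ℝ) ε), {f | ∑ i, f t i = (t : ℝ)} := by
        ext f
        simp [Set.mem_iInter]
      rw [this]
      refine isClosed_iInter fun t => ?_
      exact isClosed_eq (continuous_finset_sum _ fun i _ =>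
        (continuous_apply i).comp (continuous_apply t)) continuous_const
    have : T = {f : Set.Icc (0:ℝ) ε → Fin n → ℝ | ∀ i : Fin n, Monotone fun t => f t i} ∩
        ({f | ∀ t i, f t i ∈ Set.Icc (0:ℝ) 1} ∩
        ({f | ∀ h : (0:ℝ) ∈ Set.Icc (0:ℝ) ε, f ⟨0, h⟩ = 0} ∩
        {f | ∀ t : Set.Icc (0:ℝ) ε, ∑ i, f t i = (t : ℝ)})) := by
      ext f
      simp only [hT, Set.mem_setOf_eq, Set.mem_inter_iff]
      try tauto
    rw [this]
    exact c1.inter (c2.inter (c3.inter c4))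
  · -- equicontinuity
    apply Metric.equicontinuous_of_continuity_modulus (fun r => r)
    · exact tendsto_id
    · intro x y γ
      rw [dist_pi_le_iff dist_nonneg]
      intro i
      have key := coord_abs_le (⟨γ.1, γ.2⟩ : NShort n ε) x y i
      have hxy : (fun r : ℝ => r) (dist x y) = |(x:ℝ) - (y:ℝ)| := by
        simp only [Subtype.dist_eq, Real.dist_eq]
      rw [Real.dist_eq]
      exact key.trans_eq hxy.symm

end Compactness

end Stmt16Aux

theorem stmt16 (n : ℕ) (hn : 2 ≤ n) (ε : ℝ) (hε : 0 < ε) (hε1 : ε < 1) :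
    IsCompact {γ : NShort n ε | ∃ i, ∀ t, γ.1 t i = 0} ∧
    IsClosed {γ : NShort n ε | ∃ i, ∀ t, γ.1 t i = 0} ∧
    ∃ U : Set (NShort n ε), IsOpen U ∧
      ∃ hBU : {γ : NShort n ε | ∃ i, ∀ t, γ.1 t i = 0} ⊆ U,
        ∃ ρ : U → {γ : NShort n ε | ∃ i, ∀ t, γ.1 t i = 0},
          Continuous ρ ∧
          ∀ (x : NShort n ε) (hx : x ∈ {γ : NShort n ε | ∃ i, ∀ t, γ.1 t i = 0}),
            ρ ⟨x, hBU hx⟩ = ⟨x, hx⟩ := by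
  have hn0 : 0 < n := by omega
  set B : Set (NShort n ε) := {γ : NShort n ε | ∃ i, ∀ t, γ.1 t i = 0} with hBdef
  -- closedness
  have hBclosed : IsClosed B := by
    have hB : B = ⋃ i : Fin n, {γ : NShort n ε | ∀ t, γ.1 t i = 0} := by
      ext γ
      simp [hBdef, Set.mem_iUnion]
    rw [hB]
    apply isClosed_iUnion_of_finite
    intro i
    have : {γ : NShort n ε | ∀ t, γ.1 t i = 0} =
        ⋂ t : Set.Icc (0:ℝ) ε, {γ : NShort n ε | γ.1 t i = 0} := by
      ext γ
      simp [Set.mem_iInter]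
    rw [this]
    refine isClosed_iInter fun t => ?_
    apply isClosed_eq _ continuous_const
    exact (continuous_apply i).comp
      ((continuous_eval_const t).comp continuous_subtype_val)
  -- compactness
  have hScompact := Stmt16Aux.isCompact_natural (n := n) (ε := ε) hε.le
  have hCS : CompactSpace (NShort n ε) := isCompact_iff_compactSpace.mp hScompact
  have hBcompact : IsCompact B := hBclosed.isCompact
  refine ⟨hBcompact, hBclosed, ?_⟩
  -- the open set
  refine ⟨{γ : NShort n ε | ε/2 < Stmt16Aux.LL hn0 hε.le γ}, ?_, ?_⟩
  · exact isOpen_lt continuous_const (Stmt16Aux.LL_continuous hn0 hε)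
  · have hBU : B ⊆ {γ : NShort n ε | ε/2 < Stmt16Aux.LL hn0 hε.le γ} := by
      intro γ hγ
      have := Stmt16Aux.LL_eq_of_B hn0 hε.le γ hγ
      simp only [Set.mem_setOf_eq, this]
      linarith
    refine ⟨hBU, ?_⟩
    have hLpos : ∀ x : {γ : NShort n ε | ε/2 < Stmt16Aux.LL hn0 hε.le γ},
        0 < Stmt16Aux.LL hn0 hε.le x.1 := fun x => lt_trans (by linarith) x.2
    refine ⟨fun x => ⟨⟨Stmt16Aux.PCont hn0 hε x.1 (hLpos x),
      Stmt16Aux.PCont_natural hn0 hε hε1 x.1 (hLpos x)⟩,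
      Stmt16Aux.PCont_memB hn0 hε x.1 (hLpos x)⟩, ?_, ?_⟩
    · -- continuity
      apply Continuous.subtype_mk
      apply Continuous.subtype_mk
      rw [Metric.continuous_iff]
      intro x δ hδ
      refine ⟨δ / (24 * n + 16), by positivity, fun y hy => ?_⟩
      have key : dist (Stmt16Aux.PCont hn0 hε y.1 (hLpos y))
          (Stmt16Aux.PCont hn0 hε x.1 (hLpos x)) ≤ (24 * n + 15) * dist y.1.1 x.1.1 := by
        rw [ContinuousMap.dist_le (by positivity)]
        intro s
        rw [dist_pi_le_iff (by positivity)]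
        intro j
        rw [Real.dist_eq]
        exact Stmt16Aux.Pf_dist hn0 hε.le y.1 x.1 y.2 x.2 hε s.2.1 s.2.2 j
      have hdist : dist y.1.1 x.1.1 = dist y x := by
        rw [Subtype.dist_eq y x]; rfl
      rw [hdist] at key
      calc dist (Stmt16Aux.PCont hn0 hε y.1 (hLpos y)) (Stmt16Aux.PCont hn0 hε x.1 (hLpos x))
          ≤ (24 * n + 15) * dist y x := key
        _ < δ := by
            have hnn : (0:ℝ) ≤ 24 * n + 15 := by positivity
            have h2 : (24 * (n:ℝ) + 15) * dist y x ≤ (24 * n + 15) * (δ / (24 * n + 16)) := by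
              apply mul_le_mul_of_nonneg_left hy.le hnn
            have h5 : 0 < δ / (24 * (n:ℝ) + 16) := by positivity
            have h6 : (24 * (n:ℝ) + 15) * (δ / (24 * (n:ℝ) + 16)) <
                (24 * (n:ℝ) + 16) * (δ / (24 * (n:ℝ) + 16)) := by
              apply mul_lt_mul_of_pos_right _ h5
              linarith
            have h7 : (24 * (n:ℝ) + 16) * (δ / (24 * (n:ℝ) + 16)) = δ := by
              field_simp
            linarith
    · -- identity on B
      intro x hx
      apply Subtype.ext
      apply Subtype.ext
      apply ContinuousMap.ext
      intro s
      funext j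
      have hs : (s : ℝ) ∈ Set.Icc (0:ℝ) ε := s.2
      have heq := Stmt16Aux.Pf_id hn0 hε.le x hx hs j
      have hsub : (⟨(s:ℝ), hs⟩ : Set.Icc (0:ℝ) ε) = s := Subtype.ext rfl
      calc Stmt16Aux.PCont hn0 hε x (hLpos ⟨x, hBU hx⟩) s j
          = Stmt16Aux.Pf hn0 hε.le x (s:ℝ) j := rfl
        _ = x.1 ⟨(s:ℝ), hs⟩ j := heq
        _ = x.1 s j := by rw [hsub]
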